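/- arXiv:1308.6175 — 2 statements merged into one kernel-verified Lean document; each statement's English description precedes it below -/
import Mathlib

section
/- Let C_0 ⊆ C_1 ⊆ ... ⊆ C_{a-1} ⊆ C_a = (ZMod 2)^n be a family of nested binary linear codes that is closed under Schur product. If b_1, ..., b_n and b'_1, ..., b'_n are two bases of (ZMod 2)^n such that b_1, ..., b_{k_i} span C_i and b'_1, ..., b'_{k_i} span C_i for each i, then the corresponding Construction D sets are equal: Λ_D(b) = Λ_D(b'). That is, under the Schur-product closure hypothesis the lattice from Construction D is independent of the chosen basis. -/
noncomputable section

/-- The natural embedding of `(ZMod 2)^n` into `ℤ^n`, applying coordinatewise the map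
sending `0` to `0` and `1` to `1`. -/
def psi {n : ℕ} (x : Fin n → ZMod 2) : Fin n → ℤ := fun k => ((x k).val : ℤ)

/-- The basis `b` of `(ZMod 2)^n` is such that its first `k_i = dim C_i` vectors
`b_1, ..., b_{k_i}` span `C_i`, for each `i < a`. -/
def SpansChain {n : ℕ} (a : ℕ) (C : ℕ → Submodule (ZMod 2) (Fin n → ZMod 2))
    (b : Module.Basis (Fin n) (ZMod 2) (Fin n → ZMod 2)) : Prop :=
  ∀ i < a, Submodule.span (ZMod 2)
      ((fun j => b j) '' {j : Fin n | (j : ℕ) < Module.finrank (ZMod 2) (C i)}) = C i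

/-- The Construction D set `Λ_D` associated to a chain of codes `C` and a basis `b`:
all vectors `Σ_{i<a} 2^i Σ_{j ≤ k_i} α_j^{(i)} ψ(b_j) + 2^a l` with `α_j^{(i)} ∈ {0,1}`,
`l ∈ ℤ^n`, and `k_i = dim C_i`. -/
def LambdaD {n : ℕ} (a : ℕ) (C : ℕ → Submodule (ZMod 2) (Fin n → ZMod 2))
    (b : Module.Basis (Fin n) (ZMod 2) (Fin n → ZMod 2)) : Set (Fin n → ℤ) :=
  { x | ∃ (α : ℕ → Fin n → ℤ) (l : Fin n → ℤ),
      (∀ i j, α i j = 0 ∨ α i j = 1) ∧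
      x = (∑ i ∈ Finset.range a, (2 ^ i : ℤ) •
            ∑ j ∈ Finset.univ.filter
                (fun j : Fin n => (j : ℕ) < Module.finrank (ZMod 2) (C i)),
              α i j • psi (b j)) + (2 ^ a : ℤ) • l }

/-! ### Auxiliary development -/

/-- The "code formula" set, defined recursively: `RecSet C a r` is the set of
`ψ(c_{a-r}) + 2ψ(c_{a-r+1}) + ... + 2^{r-1}ψ(c_{a-1}) + 2^r ℤ^n`. -/
def RecSet {n : ℕ} (C : ℕ → Submodule (ZMod 2) (Fin n → ZMod 2)) (a : ℕ) :
    ℕ → Set (Fin n → ℤ)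
  | 0 => Set.univ
  | r + 1 => {x | ∃ c ∈ C (a - (r + 1)), ∃ y ∈ RecSet C a r, x = psi c + (2 : ℤ) • y}

variable {n a : ℕ} {C : ℕ → Submodule (ZMod 2) (Fin n → ZMod 2)}

lemma psi_zero : psi (0 : Fin n → ZMod 2) = 0 := by
  funext k; simp [psi]

lemma psi_add_eq (c d : Fin n → ZMod 2) :
    psi c + psi d = psi (c + d) + (2 : ℤ) • psi (c * d) := by
  funext k
  have h : ∀ x y : ZMod 2, (x.val : ℤ) + (y.val : ℤ) =
      ((x + y).val : ℤ) + 2 * ((x * y).val : ℤ) := by decide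
  simpa [psi] using h (c k) (d k)

lemma zero_mem_recSet (r : ℕ) : (0 : Fin n → ℤ) ∈ RecSet C a r := by
  induction r with
  | zero => trivial
  | succ r ih =>
    exact ⟨0, (C _).zero_mem, 0, ih, by simp [psi_zero]⟩

lemma psi_mem_recSet {r : ℕ} {c : Fin n → ZMod 2} (hc : c ∈ C (a - r)) :
    psi c ∈ RecSet C a r := by
  cases r with
  | zero => trivial
  | succ r => exact ⟨c, hc, 0, zero_mem_recSet r, by simp⟩

lemma add_mem_recSet (hschur : ∀ i < a, ∀ c ∈ C i, ∀ d ∈ C i, c * d ∈ C (i + 1)) :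
    ∀ r ≤ a, ∀ x ∈ RecSet C a r, ∀ y ∈ RecSet C a r, x + y ∈ RecSet C a r := by
  intro r
  induction r with
  | zero => intro _ x _ y _; trivial
  | succ r ih =>
    intro hra x hx y hy
    obtain ⟨c, hc, u, hu, rfl⟩ := hx
    obtain ⟨d, hd, v, hv, rfl⟩ := hy
    have hia : a - (r + 1) < a := by omega
    have hidx : a - (r + 1) + 1 = a - r := by omega
    have hcd : c * d ∈ C (a - r) := by
      rw [← hidx]; exact hschur _ hia c hc d hd
    have hpsicd : psi (c * d) ∈ RecSet C a r := psi_mem_recSet hcd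
    have h1 : u + v ∈ RecSet C a r := ih (by omega) u hu v hv
    have h2 : psi (c * d) + (u + v) ∈ RecSet C a r := ih (by omega) _ hpsicd _ h1
    refine ⟨c + d, (C _).add_mem hc hd, psi (c * d) + (u + v), h2, ?_⟩
    have h := psi_add_eq c d
    funext k
    have hk := congrFun h k
    simp only [Pi.add_apply, Pi.smul_apply, smul_eq_mul] at hk ⊢
    linarith

lemma neg_mem_recSet (hmono : ∀ i < a, C i ≤ C (i + 1))
    (hschur : ∀ i < a, ∀ c ∈ C i, ∀ d ∈ C i, c * d ∈ C (i + 1)) :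
    ∀ r ≤ a, ∀ x ∈ RecSet C a r, -x ∈ RecSet C a r := by
  intro r
  induction r with
  | zero => intro _ x _; trivial
  | succ r ih =>
    intro hra x hx
    obtain ⟨c, hc, y, hy, rfl⟩ := hx
    have hia : a - (r + 1) < a := by omega
    have hidx : a - (r + 1) + 1 = a - r := by omega
    have hc' : c ∈ C (a - r) := by rw [← hidx]; exact hmono _ hia hc
    have h1 : psi c + y ∈ RecSet C a r :=
      add_mem_recSet hschur r (by omega) _ (psi_mem_recSet hc') y hy
    have h2 : -(psi c + y) ∈ RecSet C a r := ih (by omega) _ h1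
    refine ⟨c, hc, -(psi c + y), h2, ?_⟩
    funext k
    simp only [Pi.neg_apply, Pi.add_apply, Pi.smul_apply, smul_eq_mul]
    ring

lemma sum_mem_recSet (hschur : ∀ i < a, ∀ c ∈ C i, ∀ d ∈ C i, c * d ∈ C (i + 1))
    {r : ℕ} (hra : r ≤ a) {ι : Type*} [DecidableEq ι] (s : Finset ι) (f : ι → (Fin n → ℤ))
    (hf : ∀ i ∈ s, f i ∈ RecSet C a r) : (∑ i ∈ s, f i) ∈ RecSet C a r := by
  induction s using Finset.induction_on with
  | empty => simpa using zero_mem_recSet r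
  | @insert j s hnot ih =>
    rw [Finset.sum_insert hnot]
    exact add_mem_recSet hschur r hra _ (hf j (Finset.mem_insert_self _ _)) _
      (ih fun i hi => hf i (Finset.mem_insert_of_mem hi))

lemma smul_two_mem_recSet {r : ℕ} {y : Fin n → ℤ} (hy : y ∈ RecSet C a r) :
    (2 : ℤ) • y ∈ RecSet C a (r + 1) :=
  ⟨0, (C _).zero_mem, y, hy, by simp [psi_zero]⟩

lemma smul_pow_mem_recSet (s : ℕ) {r : ℕ} {y : Fin n → ℤ} (hy : y ∈ RecSet C a r) :
    ((2 : ℤ) ^ s) • y ∈ RecSet C a (r + s) := by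
  induction s with
  | zero => simpa using hy
  | succ s ih =>
    have h := smul_two_mem_recSet ih
    have h2 : (2 : ℤ) • (((2 : ℤ) ^ s) • y) = ((2 : ℤ) ^ (s + 1)) • y := by
      rw [smul_smul]; congr 1; ring
    rw [h2] at h
    exact h

/-- Carry lemma: a sum of `ψ`'s of codewords in `C (a - (r+1))` equals `ψ` of the sum
plus twice an element of `RecSet C a r`. -/
lemma carry_lemma (hschur : ∀ i < a, ∀ c ∈ C i, ∀ d ∈ C i, c * d ∈ C (i + 1))
    {r : ℕ} (hra : r + 1 ≤ a) (T : Finset (Fin n)) (f : Fin n → (Fin n → ZMod 2))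
    (hf : ∀ j ∈ T, f j ∈ C (a - (r + 1))) :
    ∃ w ∈ RecSet C a r, ∑ j ∈ T, psi (f j) = psi (∑ j ∈ T, f j) + (2 : ℤ) • w := by
  classical
  induction T using Finset.induction_on with
  | empty => exact ⟨0, zero_mem_recSet r, by simp [psi_zero]⟩
  | @insert j T hnot ih =>
    obtain ⟨w, hw, hsum⟩ := ih fun i hi => hf i (Finset.mem_insert_of_mem hi)
    have hfj : f j ∈ C (a - (r + 1)) := hf j (Finset.mem_insert_self _ _)
    have hTsum : (∑ i ∈ T, f i) ∈ C (a - (r + 1)) :=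
      Submodule.sum_mem _ fun i hi => hf i (Finset.mem_insert_of_mem hi)
    have hia : a - (r + 1) < a := by omega
    have hidx : a - (r + 1) + 1 = a - r := by omega
    have hprod : f j * (∑ i ∈ T, f i) ∈ C (a - r) := by
      rw [← hidx]; exact hschur _ hia _ hfj _ hTsum
    refine ⟨psi (f j * ∑ i ∈ T, f i) + w,
      add_mem_recSet hschur r (by omega) _ (psi_mem_recSet hprod) w hw, ?_⟩
    rw [Finset.sum_insert hnot, Finset.sum_insert hnot, hsum]
    have h := psi_add_eq (f j) (∑ i ∈ T, f i)
    funext k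
    have hk := congrFun h k
    simp only [Pi.add_apply, Pi.smul_apply, smul_eq_mul] at hk ⊢
    linarith

lemma zmod_two_cases (x : ZMod 2) : x = 0 ∨ x = 1 := by revert x; decide

section Main

variable (b : Module.Basis (Fin n) (ZMod 2) (Fin n → ZMod 2))

/-- Forward inclusion: `Λ_D(b) ⊆ RecSet C a a`. -/
lemma lambdaD_subset_recSet (hschur : ∀ i < a, ∀ c ∈ C i, ∀ d ∈ C i, c * d ∈ C (i + 1))
    (hb : SpansChain a C b) : LambdaD a C b ⊆ RecSet C a a := by
  rintro x ⟨α, l, hα, rfl⟩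
  apply add_mem_recSet hschur a le_rfl
  · apply sum_mem_recSet hschur le_rfl
    intro i hi
    rw [Finset.mem_range] at hi
    have hterm : (∑ j ∈ Finset.univ.filter
          (fun j : Fin n => (j : ℕ) < Module.finrank (ZMod 2) (C i)),
        α i j • psi (b j)) ∈ RecSet C a (a - i) := by
      apply sum_mem_recSet hschur (by omega)
      intro j hj
      rw [Finset.mem_filter] at hj
      have hbj : b j ∈ C i := by
        rw [← hb i hi]
        exact Submodule.subset_span ⟨j, hj.2, rfl⟩
      have hbj' : b j ∈ C (a - (a - i)) := by
        have h : a - (a - i) = i := by omega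
        rwa [h]
      rcases hα i j with h0 | h1
      · rw [h0]; simpa using zero_mem_recSet (a - i)
      · rw [h1, one_smul]; exact psi_mem_recSet hbj'
    have h := smul_pow_mem_recSet i hterm
    have hidx : a - i + i = a := by omega
    rwa [hidx] at h
  · have h0 : l ∈ RecSet C a 0 := trivial
    have h := smul_pow_mem_recSet a h0
    simpa using h

/-- Backward inclusion, generalized form for induction. -/
lemma recSet_subset_aux (hmono : ∀ i < a, C i ≤ C (i + 1))
    (hschur : ∀ i < a, ∀ c ∈ C i, ∀ d ∈ C i, c * d ∈ C (i + 1))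
    (hb : SpansChain a C b) :
    ∀ r ≤ a, ∀ x ∈ RecSet C a r, ∃ (α : ℕ → Fin n → ℤ) (l : Fin n → ℤ),
      (∀ i j, α i j = 0 ∨ α i j = 1) ∧
      x = (∑ i ∈ Finset.range r, (2 ^ i : ℤ) •
            ∑ j ∈ Finset.univ.filter
                (fun j : Fin n => (j : ℕ) < Module.finrank (ZMod 2) (C (a - r + i))),
              α i j • psi (b j)) + (2 ^ r : ℤ) • l := by
  classical
  intro r
  induction r with
  | zero =>
    intro _ x _
    exact ⟨fun _ _ => 0, x, fun _ _ => Or.inl rfl, by simp⟩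
  | succ r ih =>
    intro hra x hx
    obtain ⟨c, hc, y, hy, rfl⟩ := hx
    have hia : a - (r + 1) < a := by omega
    set k := Module.finrank (ZMod 2) (C (a - (r + 1))) with hk
    -- membership of c in the span of the first k basis vectors
    have hcspan : c ∈ Submodule.span (ZMod 2)
        ((fun j => b j) '' {j : Fin n | (j : ℕ) < k}) := by
      rw [hb _ hia]; exact hc
    have hsupp : ↑(b.repr c).support ⊆ {j : Fin n | (j : ℕ) < k} :=
      b.mem_span_image.1 hcspan
    set T : Finset (Fin n) := Finset.univ.filter (fun j => b.repr c j = 1) with hT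
    have hTk : ∀ j ∈ T, (j : ℕ) < k := by
      intro j hj
      rw [hT, Finset.mem_filter] at hj
      apply hsupp
      simp only [Finset.coe_sort_coe, Finsupp.mem_support_iff, Finset.mem_coe]
      rw [hj.2]; exact one_ne_zero
    -- c = ∑_{j ∈ T} b j
    have hcsum : (∑ j ∈ T, b j) = c := by
      conv_rhs => rw [← b.sum_repr c]
      rw [hT, Finset.sum_filter]
      apply Finset.sum_congr rfl
      intro j _
      rcases zmod_two_cases (b.repr c j) with h0 | h1
      · simp [h0]
      · simp [h1]
    -- each b j for j ∈ T is in the code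
    have hbT : ∀ j ∈ T, b j ∈ C (a - (r + 1)) := by
      intro j hj
      rw [← hb _ hia]
      exact Submodule.subset_span ⟨j, hTk j hj, rfl⟩
    obtain ⟨w, hw, hcarry⟩ := carry_lemma hschur hra T (fun j => b j) hbT
    rw [hcsum] at hcarry
    -- y - w ∈ RecSet C a r
    have hyw : y + -w ∈ RecSet C a r :=
      add_mem_recSet hschur r (by omega) y hy _
        (neg_mem_recSet hmono hschur r (by omega) w hw)
    obtain ⟨α', l, hα', hdecomp⟩ := ih (by omega) _ hyw
    refine ⟨fun i j => if i = 0 then (if b.repr c j = 1 then (1 : ℤ) else 0)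
      else α' (i - 1) j, l, ?_, ?_⟩
    · intro i j
      dsimp only
      split
      · split
        · exact Or.inr rfl
        · exact Or.inl rfl
      · exact hα' (i - 1) j
    · -- the big computation
      show psi c + (2 : ℤ) • y = (∑ i ∈ Finset.range (r + 1), (2 ^ i : ℤ) •
          ∑ j ∈ Finset.univ.filter
              (fun j : Fin n => (j : ℕ) < Module.finrank (ZMod 2) (C (a - (r + 1) + i))),
            (if i = 0 then (if b.repr c j = 1 then (1 : ℤ) else 0) else α' (i - 1) j) •
              psi (b j)) + (2 ^ (r + 1) : ℤ) • l
      set D : ℕ → (Fin n → ℤ) := fun i => ∑ j ∈ Finset.univ.filter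
          (fun j : Fin n => (j : ℕ) < Module.finrank (ZMod 2) (C (a - r + i))),
        α' i j • psi (b j) with hD
      have hfilter : (Finset.univ.filter
          (fun j : Fin n => (j : ℕ) < Module.finrank (ZMod 2) (C (a - (r + 1) + 0)))).filter
          (fun j => b.repr c j = 1) = T := by
        ext j
        simp only [Finset.mem_filter, Finset.mem_univ, true_and, hT]
        constructor
        · rintro ⟨_, h⟩; exact h
        · intro h
          refine ⟨?_, h⟩
          have hjs : j ∈ (b.repr c).support := by
            rw [Finsupp.mem_support_iff, h]; exact one_ne_zero
          have := hsupp hjs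
          simpa [Nat.add_zero] using this
      have h0term : ((2 : ℤ) ^ 0) • (∑ j ∈ Finset.univ.filter
            (fun j : Fin n => (j : ℕ) < Module.finrank (ZMod 2) (C (a - (r + 1) + 0))),
          (if (0 : ℕ) = 0 then (if b.repr c j = 1 then (1 : ℤ) else 0) else α' (0 - 1) j) •
            psi (b j)) = ∑ j ∈ T, psi (b j) := by
        rw [pow_zero, one_smul]
        conv_rhs => rw [← hfilter, Finset.sum_filter]
        apply Finset.sum_congr rfl
        intro j _
        by_cases hrep : b.repr c j = 1 <;> simp [hrep]
      have hsucc : ∀ i ∈ Finset.range r,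
          (2 ^ (i + 1) : ℤ) • (∑ j ∈ Finset.univ.filter
              (fun j : Fin n => (j : ℕ) < Module.finrank (ZMod 2) (C (a - (r + 1) + (i + 1)))),
            (if i + 1 = 0 then (if b.repr c j = 1 then (1 : ℤ) else 0) else α' (i + 1 - 1) j) •
              psi (b j)) = (2 : ℤ) • ((2 ^ i : ℤ) • D i) := by
        intro i _
        have hidx2 : a - (r + 1) + (i + 1) = a - r + i := by omega
        rw [hidx2, smul_smul]
        have h21 : ((2 : ℤ) * 2 ^ i) = 2 ^ (i + 1) := by ring
        rw [h21]
        have hsum : (∑ j ∈ Finset.univ.filter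
            (fun j : Fin n => (j : ℕ) < Module.finrank (ZMod 2) (C (a - r + i))),
            (if i + 1 = 0 then (if b.repr c j = 1 then (1 : ℤ) else 0) else α' (i + 1 - 1) j) •
              psi (b j)) = D i := by
          rw [hD]
          apply Finset.sum_congr rfl
          intro j _
          simp
        rw [hsum]
      rw [Finset.sum_range_succ', Finset.sum_congr rfl hsucc, h0term, ← Finset.smul_sum]
      have hEeq : (∑ i ∈ Finset.range r, (2 ^ i : ℤ) • D i) = y + -w - (2 ^ r : ℤ) • l := by
        rw [hdecomp]; abel
      rw [hEeq, hcarry]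
      have hpow : (2 ^ (r + 1) : ℤ) = 2 * 2 ^ r := by ring
      funext kk
      simp only [Pi.add_apply, Pi.smul_apply, Pi.sub_apply, Pi.neg_apply, smul_eq_mul, hpow]
      ring

/-- Backward inclusion: `RecSet C a a ⊆ Λ_D(b)`. -/
lemma recSet_subset_lambdaD (hmono : ∀ i < a, C i ≤ C (i + 1))
    (hschur : ∀ i < a, ∀ c ∈ C i, ∀ d ∈ C i, c * d ∈ C (i + 1))
    (hb : SpansChain a C b) : RecSet C a a ⊆ LambdaD a C b := by
  intro x hx
  obtain ⟨α, l, hα, hdecomp⟩ := recSet_subset_aux b hmono hschur hb a le_rfl x hx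
  refine ⟨α, l, hα, ?_⟩
  rw [hdecomp]
  congr 1
  apply Finset.sum_congr rfl
  intro i _
  have h : a - a + i = i := by omega
  rw [h]

end Main

/-- If the chain of nested binary linear codes is closed under Schur
product, then the Construction D set is independent of the chosen basis: for any two
bases `b, b'` of `(ZMod 2)^n` whose first `k_i` vectors span `C_i`,
`Λ_D(b) = Λ_D(b')`. -/
theorem lambdaD_basis_independent {n a : ℕ}
    (C : ℕ → Submodule (ZMod 2) (Fin n → ZMod 2))
    (hmono : ∀ i < a, C i ≤ C (i + 1)) (htop : C a = ⊤)
    (hschur : ∀ i < a, ∀ c ∈ C i, ∀ d ∈ C i, c * d ∈ C (i + 1))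
    (b b' : Module.Basis (Fin n) (ZMod 2) (Fin n → ZMod 2))
    (hb : SpansChain a C b) (hb' : SpansChain a C b') :
    LambdaD a C b = LambdaD a C b' := by
  apply Set.Subset.antisymm
  · exact (lambdaD_subset_recSet b hschur hb).trans
      (recSet_subset_lambdaD b' hmono hschur hb')
  · exact (lambdaD_subset_recSet b' hschur hb').trans
      (recSet_subset_lambdaD b hmono hschur hb)
end
end

section
/- Let C be a linear code over 𝒰_a of length n that can be expressed as C = C_0 + u·C_1 + ... + u^{a-1}·C_{a-1} for binary codes C_0 ⊆ C_1 ⊆ ... ⊆ C_{a-1} ⊆ (ZMod 2)^n that are closed under Schur product (i.e., C = { Σ_{i=0}^{a-1} c_i u^i | c_i ∈ C_i }, and c ∗ d ∈ C_{i+1} for all c, d ∈ C_i, with C_a := (ZMod 2)^n). Then Γ_A' := Φ(C) + 2^a ℤ^n = { Φ(c) + 2^a l | c ∈ C, l ∈ ℤ^n } is an additive subgroup of ℤ^n, i.e., a lattice. -/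
noncomputable section

set_option synthInstance.maxHeartbeats 400000

/-- The quotient ring `𝒰_a = 𝔽₂[u]/u^a`. -/
abbrev Ua (a : ℕ) : Type :=
  Polynomial (ZMod 2) ⧸ Ideal.span {(Polynomial.X : Polynomial (ZMod 2)) ^ a}

/-- The image `u` of the variable `X` in `𝒰_a`. -/
noncomputable def uU (a : ℕ) : Ua a := Ideal.Quotient.mk _ Polynomial.X

/-- The canonical representative (of degree `< a`) of an element of `𝒰_a`. -/
noncomputable def uaRep {a : ℕ} (x : Ua a) : Polynomial (ZMod 2) :=
  Function.surjInv
    (Ideal.Quotient.mk_surjective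
      (I := Ideal.span {(Polynomial.X : Polynomial (ZMod 2)) ^ a})) x
    %ₘ (Polynomial.X ^ a)

/-- The coefficient `b_j` of `u^j` in `x = Σ_{j<a} b_j u^j ∈ 𝒰_a`. -/
noncomputable def uaCoeff {a : ℕ} (x : Ua a) (j : ℕ) : ZMod 2 := (uaRep x).coeff j

/-- The map `Φ : 𝒰_a → ℤ` sending `Σ_{j<a} b_j u^j` to `Σ_{j<a} ψ(b_j) 2^j`. -/
noncomputable def PhiU {a : ℕ} (x : Ua a) : ℤ :=
  ∑ j ∈ Finset.range a, ((uaCoeff x j).val : ℤ) * 2 ^ j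

/-- `Φ` extended componentwise to a map `(Fin n → 𝒰_a) → (Fin n → ℤ)`. -/
noncomputable def PhiV {n a : ℕ} (c : Fin n → Ua a) : Fin n → ℤ := fun k => PhiU (c k)

/-- The Construction A' set `Γ_{A'} = Φ(C) + 2^a ℤ^n` of a code `C ⊆ (Fin n → 𝒰_a)`. -/
def GammaA' {n a : ℕ} (C : Set (Fin n → Ua a)) : Set (Fin n → ℤ) :=
  { x | ∃ c ∈ C, ∃ l : Fin n → ℤ, x = PhiV c + (2 ^ a : ℤ) • l }

/-- The code `C = C₀ + u C₁ + ... + u^{a-1} C_{a-1}` over `𝒰_a` associated to a chain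
of binary codes: all vectors `Σ_{i<a} c_i u^i` with `c_i ∈ C_i`. -/
noncomputable def CodeSet {n : ℕ} (a : ℕ) (C : ℕ → Submodule (ZMod 2) (Fin n → ZMod 2)) :
    Set (Fin n → Ua a) :=
  { x | ∃ c : ℕ → Fin n → ZMod 2,
      (∀ i < a, c i ∈ C i) ∧
      x = fun k => Ideal.Quotient.mk _
        (∑ i ∈ Finset.range a, Polynomial.C (c i k) * Polynomial.X ^ i) }

/-! ### Auxiliary lemmas -/

lemma uaRep_mk {a : ℕ} (p : Polynomial (ZMod 2)) :
    uaRep (Ideal.Quotient.mk (Ideal.span {(Polynomial.X : Polynomial (ZMod 2)) ^ a}) p)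
      = p %ₘ (Polynomial.X ^ a) := by
  unfold uaRep
  set q := Function.surjInv
      (Ideal.Quotient.mk_surjective
        (I := Ideal.span {(Polynomial.X : Polynomial (ZMod 2)) ^ a}))
      (Ideal.Quotient.mk _ p) with hqdef
  have hq : Ideal.Quotient.mk (Ideal.span {(Polynomial.X : Polynomial (ZMod 2)) ^ a}) q
      = Ideal.Quotient.mk _ p := Function.surjInv_eq _ _
  have hdvd : (Polynomial.X : Polynomial (ZMod 2)) ^ a ∣ q - p := by
    rw [← Ideal.mem_span_singleton]
    exact Ideal.Quotient.eq.mp hq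
  have hz : (q - p) %ₘ (Polynomial.X ^ a) = 0 :=
    (Polynomial.modByMonic_eq_zero_iff_dvd (Polynomial.monic_X_pow a)).mpr hdvd
  have : q %ₘ (Polynomial.X ^ a) = (q - p) %ₘ (Polynomial.X ^ a) + p %ₘ (Polynomial.X ^ a) := by
    rw [← Polynomial.add_modByMonic]; ring_nf
  rw [this, hz, zero_add]

lemma deg_lt {a : ℕ} (b : ℕ → ZMod 2) :
    (∑ i ∈ Finset.range a, Polynomial.C (b i) * Polynomial.X ^ i).degree < (a : WithBot ℕ) := by
  apply lt_of_le_of_lt (Polynomial.degree_sum_le _ _)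
  apply Finset.sup_lt_iff (by exact_mod_cast WithBot.bot_lt_coe (a:ℕ)) |>.mpr
  intro i hi
  exact lt_of_le_of_lt (Polynomial.degree_C_mul_X_pow_le _ _)
    (by exact_mod_cast Nat.cast_lt.mpr (Finset.mem_range.mp hi))

lemma coeff_sum_eq {a : ℕ} (b : ℕ → ZMod 2) (j : ℕ) (hj : j < a) :
    (∑ i ∈ Finset.range a, Polynomial.C (b i) * Polynomial.X ^ i).coeff j = b j := by
  rw [Polynomial.finset_sum_coeff]
  simp only [Polynomial.coeff_C_mul, Polynomial.coeff_X_pow]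
  rw [Finset.sum_eq_single j]
  · simp
  · intro i _ hij; rw [if_neg (Ne.symm hij), mul_zero]
  · intro h; exact absurd (Finset.mem_range.mpr hj) h

lemma uaCoeff_mk {a : ℕ} (b : ℕ → ZMod 2) (j : ℕ) (hj : j < a) :
    uaCoeff (Ideal.Quotient.mk (Ideal.span {(Polynomial.X : Polynomial (ZMod 2)) ^ a})
      (∑ i ∈ Finset.range a, Polynomial.C (b i) * Polynomial.X ^ i)) j = b j := by
  unfold uaCoeff
  rw [uaRep_mk]
  rw [(Polynomial.modByMonic_eq_self_iff (Polynomial.monic_X_pow a)).mpr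
    (by rw [Polynomial.degree_X_pow]; exact deg_lt b)]
  exact coeff_sum_eq b j hj

lemma PhiV_codeword {n a : ℕ} (b : ℕ → Fin n → ZMod 2) :
    PhiV (fun k => Ideal.Quotient.mk (Ideal.span {(Polynomial.X : Polynomial (ZMod 2)) ^ a})
        (∑ i ∈ Finset.range a, Polynomial.C (b i k) * Polynomial.X ^ i))
      = fun k => ∑ i ∈ Finset.range a, ((b i k).val : ℤ) * 2 ^ i := by
  funext k
  unfold PhiV PhiU
  exact Finset.sum_congr rfl fun j hj => by
    rw [uaCoeff_mk (fun i => b i k) j (Finset.mem_range.mp hj)]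

lemma bit_identity (b b' r : ZMod 2) :
    b.val + b'.val + r.val = (b + b' + r).val + 2 * (b * b' + b * r + b' * r).val := by
  revert b b' r; decide

section carry

variable {n : ℕ} (c d : ℕ → Fin n → ZMod 2)

def carry : ℕ → Fin n → ZMod 2
  | 0 => 0
  | i + 1 => c i * d i + c i * carry i + d i * carry i

def sumbit (i : ℕ) : Fin n → ZMod 2 := c i + d i + carry c d i

lemma carry_sum_eq (m : ℕ) (k : Fin n) :
    (∑ i ∈ Finset.range m, ((c i k).val : ℤ) * 2 ^ i)
      + (∑ i ∈ Finset.range m, ((d i k).val : ℤ) * 2 ^ i)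
    = (∑ i ∈ Finset.range m, ((sumbit c d i k).val : ℤ) * 2 ^ i)
      + 2 ^ m * ((carry c d m k).val : ℤ) := by
  induction m with
  | zero => simp [carry]
  | succ m ih =>
    rw [Finset.sum_range_succ, Finset.sum_range_succ, Finset.sum_range_succ]
    have hbit : ((c m k).val : ℤ) + ((d m k).val : ℤ) + ((carry c d m k).val : ℤ)
        = ((sumbit c d m k).val : ℤ) + 2 * ((carry c d (m + 1) k).val : ℤ) := by
      have := bit_identity (c m k) (d m k) (carry c d m k)
      have h2 : carry c d (m+1) k = c m k * d m k + c m k * carry c d m k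
          + d m k * carry c d m k := rfl
      rw [h2]
      simp only [sumbit, Pi.add_apply, Pi.mul_apply]
      exact_mod_cast this
    push_cast at hbit ih ⊢
    linear_combination ih + (2:ℤ) ^ m * hbit

end carry


/-- If a linear code `C` over `𝒰_a` can be expressed as
`C = C₀ + u C₁ + ... + u^{a-1} C_{a-1}` for nested binary codes closed under Schur
product (with `C_a = (ZMod 2)^n`), then `Γ_{A'} = Φ(C) + 2^a ℤ^n` is an additive
subgroup of `ℤ^n`, i.e. a lattice. -/
theorem gammaA'_lattice_of_schur {n a : ℕ} (M : Submodule (Ua a) (Fin n → Ua a))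
    (C : ℕ → Submodule (ZMod 2) (Fin n → ZMod 2))
    (hmono : ∀ i < a, C i ≤ C (i + 1)) (htop : C a = ⊤)
    (hschur : ∀ i < a, ∀ c ∈ C i, ∀ d ∈ C i, c * d ∈ C (i + 1))
    (hexpr : (M : Set (Fin n → Ua a)) = CodeSet a C) :
    ∃ G : AddSubgroup (Fin n → ℤ),
      (G : Set (Fin n → ℤ)) = GammaA' (M : Set (Fin n → Ua a)) := by
  set S : Set (Fin n → ℤ) := GammaA' (M : Set (Fin n → Ua a)) with hS
  -- closure under translation by 2^a • l
  have htrans : ∀ x ∈ S, ∀ l : Fin n → ℤ, x + (2 ^ a : ℤ) • l ∈ S := by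
    rintro x ⟨c, hc, l', rfl⟩ l
    exact ⟨c, hc, l' + l, by rw [smul_add]; ring_nf⟩
  -- zero
  have hzero : (0 : Fin n → ℤ) ∈ S := by
    refine ⟨fun k => Ideal.Quotient.mk _
      (∑ i ∈ Finset.range a, Polynomial.C ((0 : ℕ → Fin n → ZMod 2) i k) * Polynomial.X ^ i),
      ?_, 0, ?_⟩
    · rw [hexpr]
      exact ⟨0, fun i _ => (C i).zero_mem, rfl⟩
    · rw [PhiV_codeword]
      funext k
      simp
  -- addition
  have hadd : ∀ x ∈ S, ∀ y ∈ S, x + y ∈ S := by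
    rintro x ⟨cx, hcx, lx, rfl⟩ y ⟨cy, hcy, ly, rfl⟩
    rw [hexpr] at hcx hcy
    obtain ⟨c, hc, rfl⟩ := hcx
    obtain ⟨d, hd, rfl⟩ := hcy
    -- carries stay in the chain
    have hcarry : ∀ i < a, carry c d i ∈ C i := by
      intro i
      induction i with
      | zero => intro _; exact (C 0).zero_mem
      | succ i ih =>
        intro hia
        have hi : i < a := Nat.lt_of_succ_lt hia
        have hci := hc i hi
        have hdi := hd i hi
        have hri := ih hi
        exact (C (i+1)).add_mem ((C (i+1)).add_mem
          (hschur i hi _ hci _ hdi) (hschur i hi _ hci _ hri)) (hschur i hi _ hdi _ hri)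
    have hsum : ∀ i < a, sumbit c d i ∈ C i := fun i hi =>
      (C i).add_mem ((C i).add_mem (hc i hi) (hd i hi)) (hcarry i hi)
    refine ⟨fun k => Ideal.Quotient.mk _
      (∑ i ∈ Finset.range a, Polynomial.C (sumbit c d i k) * Polynomial.X ^ i),
      by rw [hexpr]; exact ⟨sumbit c d, hsum, rfl⟩,
      (fun k => ((carry c d a k).val : ℤ)) + lx + ly, ?_⟩
    rw [PhiV_codeword, PhiV_codeword, PhiV_codeword]
    funext k
    have := carry_sum_eq c d a k
    simp only [Pi.add_apply, Pi.smul_apply, smul_eq_mul]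
    push_cast
    linarith [this]
  -- natural multiples
  have hnsmul : ∀ (m : ℕ), ∀ x ∈ S, (m : ℤ) • x ∈ S := by
    intro m
    induction m with
    | zero => intro x _; simpa using hzero
    | succ m ih =>
      intro x hx
      have : ((m + 1 : ℕ) : ℤ) • x = (m : ℤ) • x + x := by
        push_cast; rw [add_smul, one_smul]
      rw [this]
      exact hadd _ (ih x hx) _ hx
  -- negation
  have hneg : ∀ x ∈ S, -x ∈ S := by
    intro x hx
    have h1 : ((2 ^ a - 1 : ℕ) : ℤ) • x ∈ S := hnsmul _ x hx
    have h2 : -x = ((2 ^ a - 1 : ℕ) : ℤ) • x + (2 ^ a : ℤ) • (-x) := by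
      have : ((2 ^ a - 1 : ℕ) : ℤ) = 2 ^ a - 1 := by
        push_cast [Nat.one_le_two_pow]; ring
      rw [this]
      funext k
      simp only [Pi.add_apply, Pi.smul_apply, Pi.neg_apply, smul_eq_mul]
      ring
    rw [h2]
    exact htrans _ h1 _
  exact ⟨{ carrier := S, add_mem' := fun ha hb => hadd _ ha _ hb,
           zero_mem' := hzero, neg_mem' := fun h => hneg _ h }, rfl⟩
end
end
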